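/- Let P and Q be probability measures on X with P ≪ Q and g₀ a measurable version of dP/dQ. Let g : X → (0,∞) be measurable with g(x) ≤ M_u for all x, for some constant M_u > 0, and assume g^{1/2}, g₀^{1/2} are Q-integrable and g^{−1/2}, g₀^{−1/2} are P-integrable. Define the population objective M(g) = 1 − (1/2)∫ g^{−1/2} dP − (1/2)∫ g^{1/2} dQ and the Hellinger-type distance h_Q(g,g₀)² = ∫ (√g − √g₀)² dQ. Then M(g₀) − M(g) ≥ (1/(2√M_u)) · h_Q(g,g₀)². -/

import Mathlib

open MeasureTheory
open scoped ENNReal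

/-- The excess of the population variational squared-Hellinger
objective `M(g) = 1 − (1/2)∫ g^{−1/2} dP − (1/2)∫ g^{1/2} dQ` at the true density
ratio `g₀ = dP/dQ` over a candidate `g ≤ M_u` dominates the Hellinger-type distance:
`M(g₀) − M(g) ≥ (1/(2√M_u)) · ∫ (√g − √g₀)² dQ`. -/
theorem population_objective_dominates_hellinger {X : Type*} [MeasurableSpace X]
    (P Q : Measure X) [IsProbabilityMeasure P] [IsProbabilityMeasure Q]
    (hPQ : P ≪ Q)
    (g0 : X → ℝ) (hg0m : Measurable g0) (hg0pos : ∀ x, 0 < g0 x)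
    (hver : ∀ᵐ x ∂Q, ENNReal.ofReal (g0 x) = P.rnDeriv Q x)
    (g : X → ℝ) (hgm : Measurable g) (hgpos : ∀ x, 0 < g x)
    (Mu : ℝ) (hMu : 0 < Mu) (hgMu : ∀ x, g x ≤ Mu)
    (h1 : Integrable (fun x => Real.sqrt (g x)) Q)
    (h2 : Integrable (fun x => Real.sqrt (g0 x)) Q)
    (h3 : Integrable (fun x => (Real.sqrt (g x))⁻¹) P)
    (h4 : Integrable (fun x => (Real.sqrt (g0 x))⁻¹) P) :
    (1 - (1 / 2) * (∫ x, (Real.sqrt (g0 x))⁻¹ ∂P)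
        - (1 / 2) * (∫ x, Real.sqrt (g0 x) ∂Q))
      - (1 - (1 / 2) * (∫ x, (Real.sqrt (g x))⁻¹ ∂P)
          - (1 / 2) * (∫ x, Real.sqrt (g x) ∂Q))
    ≥ (1 / (2 * Real.sqrt Mu)) *
        ∫ x, (Real.sqrt (g x) - Real.sqrt (g0 x)) ^ 2 ∂Q := by
  -- a.e. identity for rnDeriv.toReal
  have hae : ∀ᵐ x ∂Q, (P.rnDeriv Q x).toReal = g0 x := by
    filter_upwards [hver] with x hx
    rw [← hx, ENNReal.toReal_ofReal (hg0pos x).le]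
  -- transfer integrals from P to Q
  have htrans : ∀ (f : X → ℝ),
      ∫ x, g0 x * f x ∂Q = ∫ x, f x ∂P := by
    intro f
    rw [← MeasureTheory.integral_rnDeriv_smul hPQ (f := f)]
    refine integral_congr_ae ?_
    filter_upwards [hae] with x hx
    simp [hx, smul_eq_mul]
  have hA : ∫ x, g0 x * (Real.sqrt (g x))⁻¹ ∂Q = ∫ x, (Real.sqrt (g x))⁻¹ ∂P :=
    htrans _
  have hB : ∫ x, Real.sqrt (g0 x) ∂Q = ∫ x, (Real.sqrt (g0 x))⁻¹ ∂P := by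
    rw [← htrans (fun x => (Real.sqrt (g0 x))⁻¹)]
    refine integral_congr_ae (Filter.Eventually.of_forall fun x => ?_)
    have h0 : (0:ℝ) < Real.sqrt (g0 x) := Real.sqrt_pos.mpr (hg0pos x)
    field_simp
    exact Real.sq_sqrt (hg0pos x).le
  -- integrability facts over Q
  have hIA : Integrable (fun x => g0 x * (Real.sqrt (g x))⁻¹) Q := by
    have := (MeasureTheory.integrable_rnDeriv_smul_iff (f := fun x => (Real.sqrt (g x))⁻¹) hPQ).mpr h3
    refine this.congr ?_
    filter_upwards [hae] with x hx
    simp [hx, smul_eq_mul]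
  -- the pointwise function F
  set F : X → ℝ := fun x => g0 x * (Real.sqrt (g x))⁻¹ + Real.sqrt (g x) - 2 * Real.sqrt (g0 x)
    with hF
  have hIF : Integrable F Q := ((hIA.add h1).sub (h2.const_mul 2))
  have hFeq : ∀ x, F x = (Real.sqrt (g x) - Real.sqrt (g0 x)) ^ 2 * (Real.sqrt (g x))⁻¹ := by
    intro x
    have hsg : (0:ℝ) < Real.sqrt (g x) := Real.sqrt_pos.mpr (hgpos x)
    have hg0 : Real.sqrt (g0 x) ^ 2 = g0 x := Real.sq_sqrt (hg0pos x).le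
    have hgg : Real.sqrt (g x) ^ 2 = g x := Real.sq_sqrt (hgpos x).le
    simp only [hF]
    field_simp [hF]
    ring_nf
    nlinarith [hg0, hgg]
  -- pointwise bound
  have hpt : ∀ x, (1 / Real.sqrt Mu) * (Real.sqrt (g x) - Real.sqrt (g0 x)) ^ 2 ≤ F x := by
    intro x
    rw [hFeq x]
    have hsg : (0:ℝ) < Real.sqrt (g x) := Real.sqrt_pos.mpr (hgpos x)
    have hsMu : (0:ℝ) < Real.sqrt Mu := Real.sqrt_pos.mpr hMu
    have hle : Real.sqrt (g x) ≤ Real.sqrt Mu := Real.sqrt_le_sqrt (hgMu x)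
    have hinv : (Real.sqrt Mu)⁻¹ ≤ (Real.sqrt (g x))⁻¹ :=
      (inv_anti₀ hsg hle)
    have hsq : (0:ℝ) ≤ (Real.sqrt (g x) - Real.sqrt (g0 x)) ^ 2 := sq_nonneg _
    calc (1 / Real.sqrt Mu) * (Real.sqrt (g x) - Real.sqrt (g0 x)) ^ 2
        = (Real.sqrt (g x) - Real.sqrt (g0 x)) ^ 2 * (Real.sqrt Mu)⁻¹ := by ring
      _ ≤ (Real.sqrt (g x) - Real.sqrt (g0 x)) ^ 2 * (Real.sqrt (g x))⁻¹ :=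
          mul_le_mul_of_nonneg_left hinv hsq
  -- integrability of the squared term
  have hIG : Integrable (fun x => (Real.sqrt (g x) - Real.sqrt (g0 x)) ^ 2) Q := by
    refine Integrable.mono' (hIF.const_mul (Real.sqrt Mu)) ?_ ?_
    · exact (((hgm.sqrt.sub hg0m.sqrt).pow_const 2)).aestronglyMeasurable
    · refine Filter.Eventually.of_forall fun x => ?_
      have hsMu : (0:ℝ) < Real.sqrt Mu := Real.sqrt_pos.mpr hMu
      have := hpt x
      rw [Real.norm_eq_abs, abs_of_nonneg (sq_nonneg _)]
      calc (Real.sqrt (g x) - Real.sqrt (g0 x)) ^ 2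
          = Real.sqrt Mu * ((1 / Real.sqrt Mu) * (Real.sqrt (g x) - Real.sqrt (g0 x)) ^ 2) := by
            field_simp
        _ ≤ Real.sqrt Mu * F x := mul_le_mul_of_nonneg_left this hsMu.le
  -- the main integral inequality
  have hmono : (1 / Real.sqrt Mu) * ∫ x, (Real.sqrt (g x) - Real.sqrt (g0 x)) ^ 2 ∂Q
      ≤ ∫ x, F x ∂Q := by
    rw [← integral_const_mul]
    exact integral_mono (hIG.const_mul _) hIF fun x => hpt x
  have hFint : ∫ x, F x ∂Q
      = ∫ x, (Real.sqrt (g x))⁻¹ ∂P + ∫ x, Real.sqrt (g x) ∂Q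
        - 2 * ∫ x, (Real.sqrt (g0 x))⁻¹ ∂P := by
    have hIsum : Integrable (fun x => g0 x * (Real.sqrt (g x))⁻¹ + Real.sqrt (g x)) Q :=
      hIA.add h1
    have hIc : Integrable (fun x => 2 * Real.sqrt (g0 x)) Q := h2.const_mul 2
    simp only [hF]
    rw [integral_sub hIsum hIc, integral_add hIA h1, integral_const_mul, hA, hB]
  have hsMu : (0:ℝ) < Real.sqrt Mu := Real.sqrt_pos.mpr hMu
  have key : (1 / Real.sqrt Mu) * ∫ x, (Real.sqrt (g x) - Real.sqrt (g0 x)) ^ 2 ∂Q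
      ≤ ∫ x, (Real.sqrt (g x))⁻¹ ∂P + ∫ x, Real.sqrt (g x) ∂Q
        - 2 * ∫ x, (Real.sqrt (g0 x))⁻¹ ∂P := hFint ▸ hmono
  -- conclude: note ∫ √g0 dQ = ∫ (√g0)⁻¹ dP
  rw [ge_iff_le]
  have h2eq : ∫ x, Real.sqrt (g0 x) ∂Q = ∫ x, (Real.sqrt (g0 x))⁻¹ ∂P := hB
  rw [h2eq]
  have : (1 / (2 * Real.sqrt Mu)) * ∫ x, (Real.sqrt (g x) - Real.sqrt (g0 x)) ^ 2 ∂Q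
      = (1/2) * ((1 / Real.sqrt Mu) * ∫ x, (Real.sqrt (g x) - Real.sqrt (g0 x)) ^ 2 ∂Q) := by
    field_simp
    try ring
  rw [this]
  linarith [key]
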